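/- Let k be a field of characteristic p > 0 and G = Spec k[t]/(t^p) a group scheme isomorphic to α_p. For a nonzero invariant differential ω = Σ_{i=0}^{p-2} a_i t^i dt on G, the map x ↦ Σ_{i=0}^{p-2} a_i t^{i+1}/(i+1) defines the unique isomorphism ι: G → α_p = Spec k[x]/(x^p) with ι*(dx) = ω. -/

import Mathlib

open scoped TensorProduct
open Polynomial


theorem aux_deriv_exists (k : Type*) [Field k] (p : ℕ) [Fact p.Prime] [CharP k p]
    (A : Type*) [CommRing A] [Algebra k A] (u : A)
    (hupow : u ^ p = 0)
    (hker : ∀ q : k[X], aeval u q = 0 → (X ^ p : k[X]) ∣ q)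
    (hsurj : ∀ x : A, ∃ q : k[X], aeval u q = x) :
    ∃ δ : Derivation k A A, ∀ q : k[X], δ (aeval u q) = aeval u (derivative q) := by
  have hderivXp : derivative ((X : k[X]) ^ p) = 0 := by
    rw [derivative_X_pow]
    simp [CharP.cast_eq_zero k p]
  -- well-definedness
  have wd : ∀ q r : k[X], aeval u q = aeval u r →
      aeval u (derivative q) = aeval u (derivative r) := by
    intro q r h
    have h0 : aeval u (q - r) = 0 := by simp [h]
    obtain ⟨s, hs⟩ := hker _ h0
    have hq : q = r + X ^ p * s := by
      rw [← hs]; ring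
    rw [hq]
    simp [derivative_mul, hderivXp, hupow]
  choose rep hrep using hsurj
  let d : A → A := fun x => aeval u (derivative (rep x))
  have hd : ∀ q : k[X], d (aeval u q) = aeval u (derivative q) := by
    intro q
    exact wd _ q (hrep _)
  refine ⟨⟨⟨⟨d, ?_⟩, ?_⟩, ?_, ?_⟩, hd⟩
  · intro x y
    obtain ⟨q, rfl⟩ : ∃ q, aeval u q = x := ⟨rep x, hrep x⟩
    obtain ⟨r, rfl⟩ : ∃ r, aeval u r = y := ⟨rep y, hrep y⟩
    rw [← map_add (aeval u) q r, hd, hd, hd]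
    simp
  · intro c x
    obtain ⟨q, rfl⟩ : ∃ q, aeval u q = x := ⟨rep x, hrep x⟩
    simp only [RingHom.id_apply]
    have h1 : c • aeval u q = aeval u (C c * q) := by simp [Algebra.smul_def]
    rw [h1, hd, hd]
    simp [Algebra.smul_def]
  · show d 1 = 0
    have : (1 : A) = aeval u (1 : k[X]) := by simp
    rw [this, hd]
    simp
  · intro x y
    show d (x * y) = x • d y + y • d x
    obtain ⟨q, rfl⟩ : ∃ q, aeval u q = x := ⟨rep x, hrep x⟩
    obtain ⟨r, rfl⟩ : ∃ r, aeval u r = y := ⟨rep y, hrep y⟩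
    have : aeval u q * aeval u r = aeval u (q * r) := by simp
    rw [this, hd, hd, hd]
    simp [derivative_mul, smul_eq_mul]
    ring


theorem aux_deriv2_exists (k : Type*) [Field k]
    (A : Type*) [CommRing A] [Algebra k A] (δ : Derivation k A A) :
    ∃ δ₂ : Derivation A (A ⊗[k] A) (A ⊗[k] A),
      ∀ x y : A, δ₂ (x ⊗ₜ[k] y) = x ⊗ₜ[k] (δ y) := by
  have hL : ∀ x y : A, (LinearMap.baseChange A δ.toLinearMap) (x ⊗ₜ[k] y) = x ⊗ₜ[k] (δ y) :=
    fun x y => by simp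
  refine ⟨⟨LinearMap.baseChange A δ.toLinearMap, ?_, ?_⟩, hL⟩
  · show (LinearMap.baseChange A δ.toLinearMap) (1 ⊗ₜ[k] 1) = 0
    rw [hL]; simp
  · intro a b
    induction a using TensorProduct.induction_on with
    | zero => simp
    | tmul x y =>
      induction b using TensorProduct.induction_on with
      | zero => simp
      | tmul z w =>
        rw [Algebra.TensorProduct.tmul_mul_tmul, hL, hL, hL, Derivation.leibniz]
        simp only [smul_eq_mul, Algebra.TensorProduct.tmul_mul_tmul, TensorProduct.tmul_add]
        rw [mul_comm z x]
      | add b₁ b₂ h₁ h₂ =>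
        simp only [mul_add, map_add, h₁, h₂, smul_add, add_smul]
        abel
    | add a₁ a₂ h₁ h₂ =>
      simp only [add_mul, map_add, h₁, h₂, smul_add, add_smul]
      abel

/-- Let `k` be a field of characteristic `p > 0` and `G = Spec k[t]/(t^p)` a group
scheme isomorphic to `α_p` (comultiplication `Δ`).  For a nonzero invariant
differential `ω = Σ_{i ≤ p-2} aᵢ tⁱ dt` on `G`, the element
`u = Σ aᵢ t^{i+1}/(i+1)` defines the unique isomorphism `ι : G → α_p` with
`ι*(dx) = ω`: i.e. `u` is the unique primitive generator of `A` (with `u^p = 0`)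
satisfying `du = ω`. -/
theorem stmt_15 (k : Type*) [Field k] (p : ℕ) [Fact p.Prime] [CharP k p]
    -- `A = k[t]/(t^p)` with `tq` the class of the variable
    (A : Type*) [CommRing A] [Algebra k A]
    (e : A ≃ₐ[k] AdjoinRoot (X ^ p : Polynomial k))
    (tq : A) (htq : e tq = AdjoinRoot.root _)
    -- the comultiplication of the Hopf algebra structure
    (Δ : A →ₐ[k] A ⊗[k] A)
    -- `G = Spec A` is isomorphic to `α_p`: there is a primitive generator
    (hiso : ∃ u : A, u ^ p = 0 ∧ Algebra.adjoin k {u} = ⊤ ∧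
      Δ u = u ⊗ₜ[k] (1 : A) + (1 : A) ⊗ₜ[k] u)
    -- the coefficients of the differential form `ω = Σ_{i ≤ p-2} aᵢ tⁱ dt`
    (a : ℕ → k)
    -- `ω` is nonzero
    (hω : (∑ i ∈ Finset.range (p - 1),
        (algebraMap k A (a i)) • ((tq ^ i) • (KaehlerDifferential.D k A tq)))
        ≠ 0)
    -- `ω` is translation invariant: `μ*ω = pr₂*ω` in `Ω[(A ⊗ A)⁄A]`
    (hinv : (∑ i ∈ Finset.range (p - 1),
        (algebraMap k (A ⊗[k] A) (a i)) •
          ((Δ (tq ^ i)) • (KaehlerDifferential.D A (A ⊗[k] A) (Δ tq)))) =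
      ∑ i ∈ Finset.range (p - 1),
        (algebraMap k (A ⊗[k] A) (a i)) •
          (((1 : A) ⊗ₜ[k] (tq ^ i)) •
            (KaehlerDifferential.D A (A ⊗[k] A) ((1 : A) ⊗ₜ[k] tq)))) :
    -- `u = Σ_{i ≤ p-2} aᵢ t^{i+1}/(i+1)` is the unique primitive generator with
    -- `du = ω`
    (∃! u : A,
      Δ u = u ⊗ₜ[k] (1 : A) + (1 : A) ⊗ₜ[k] u ∧
        u ^ p = 0 ∧ Algebra.adjoin k {u} = ⊤ ∧
        KaehlerDifferential.D k A u =
          ∑ i ∈ Finset.range (p - 1),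
            (algebraMap k A (a i)) • ((tq ^ i) • (KaehlerDifferential.D k A tq))) ∧
    (letI u := ∑ i ∈ Finset.range (p - 1),
            (algebraMap k A (a i / ((i : k) + 1))) • tq ^ (i + 1)
     Δ u = u ⊗ₜ[k] (1 : A) + (1 : A) ⊗ₜ[k] u ∧
        u ^ p = 0 ∧ Algebra.adjoin k {u} = ⊤ ∧
        KaehlerDifferential.D k A u =
          ∑ i ∈ Finset.range (p - 1),
            (algebraMap k A (a i)) • ((tq ^ i) • (KaehlerDifferential.D k A tq))) := by
  obtain ⟨u, hupow, huadj, huprim⟩ := hiso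
  have hp : p.Prime := Fact.out
  -- notation
  set ω : Ω[A⁄k] := ∑ i ∈ Finset.range (p - 1),
      (algebraMap k A (a i)) • ((tq ^ i) • (KaehlerDifferential.D k A tq)) with hωdef
  set u₀ : A := ∑ i ∈ Finset.range (p - 1),
      (algebraMap k A (a i / ((i : k) + 1))) • tq ^ (i + 1) with hu₀def
  -- basic facts
  have hne : ∀ i, i + 1 < p → ((i : k) + 1) ≠ 0 := by
    intro i hi
    have h1 : ((i : k) + 1) = ((i + 1 : ℕ) : k) := by push_cast; ring
    rw [h1, Ne, CharP.cast_eq_zero_iff k p]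
    exact Nat.not_dvd_of_pos_of_lt (Nat.succ_pos i) hi
  have hroot : (AdjoinRoot.root (X ^ p : k[X])) ^ p = 0 := by
    have h1 : (AdjoinRoot.root (X ^ p : k[X])) ^ p = AdjoinRoot.mk _ ((X : k[X]) ^ p) := by
      rw [map_pow, AdjoinRoot.mk_X]
    rw [h1, AdjoinRoot.mk_self]
  have htqp : tq ^ p = 0 := by
    apply e.injective
    rw [map_pow, htq, hroot, map_zero]
  -- the isomorphism with AdjoinRoot
  have huaeval : aeval u ((X : k[X]) ^ p) = 0 := by rw [map_pow, aeval_X, hupow]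
  set φ : AdjoinRoot ((X : k[X]) ^ p) →ₐ[k] A := AdjoinRoot.liftAlgHom _ (Algebra.ofId k A) u huaeval with hφdef
  have hφmk : ∀ q : k[X], φ (AdjoinRoot.mk _ q) = aeval u q := fun q => AdjoinRoot.liftAlgHom_mk _ (Algebra.ofId k A) u huaeval q
  have hφroot : φ (AdjoinRoot.root _) = u := AdjoinRoot.liftAlgHom_root _ (Algebra.ofId k A) u huaeval
  have hφsurj : Function.Surjective φ := by
    have hle : Algebra.adjoin k {u} ≤ φ.range := by
      apply Algebra.adjoin_le
      intro x hx
      rw [Set.mem_singleton_iff] at hx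
      subst hx
      exact ⟨AdjoinRoot.root _, hφroot⟩
    intro x
    have hx : x ∈ Algebra.adjoin k {u} := by rw [huadj]; trivial
    exact hle hx
  have hφinj : Function.Injective φ := by
    haveI : Module.Finite k (AdjoinRoot ((X : k[X]) ^ p)) :=
      Module.Finite.of_basis (AdjoinRoot.powerBasis' (g := ((X : k[X]) ^ p)) (monic_X_pow _)).basis
    haveI : Module.Finite k A := Module.Finite.equiv e.symm.toLinearEquiv
    have hfr : Module.finrank k (AdjoinRoot ((X : k[X]) ^ p)) = Module.finrank k A :=
      e.toLinearEquiv.finrank_eq.symm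
    have h := (LinearMap.injective_iff_surjective_of_finrank_eq_finrank
      (f := φ.toLinearMap) hfr).mpr hφsurj
    exact h
  have hker : ∀ q : k[X], aeval u q = 0 → ((X : k[X]) ^ p) ∣ q := by
    intro q hq
    have h1 : φ (AdjoinRoot.mk _ q) = φ 0 := by rw [hφmk, map_zero, hq]
    have h2 := hφinj h1
    exact AdjoinRoot.mk_eq_zero.mp h2
  have hsurj : ∀ x : A, ∃ q : k[X], aeval u q = x := by
    intro x
    have hx : x ∈ Algebra.adjoin k {u} := by rw [huadj]; trivial
    rw [Algebra.adjoin_singleton_eq_range_aeval] at hx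
    obtain ⟨q, hq⟩ := hx
    exact ⟨q, hq⟩
  obtain ⟨δ, hδ⟩ := aux_deriv_exists k p A u hupow hker hsurj
  have hδu : δ u = 1 := by
    have h := hδ X
    simpa using h
  obtain ⟨δ₂, hδ₂⟩ := aux_deriv2_exists k A δ
  -- the counit
  set Φ : AdjoinRoot ((X : k[X]) ^ p) ≃ₐ[k] A := AlgEquiv.ofBijective φ ⟨hφinj, hφsurj⟩ with hΦdef
  have hε0 : aeval (0 : k) ((X : k[X]) ^ p) = 0 := by simp [hp.pos.ne']
  set ε : A →ₐ[k] k := (AdjoinRoot.liftAlgHom _ (Algebra.ofId k k) (0 : k) hε0).comp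
    (Φ.symm : A →ₐ[k] AdjoinRoot ((X : k[X]) ^ p)) with hεdef
  have hεu : ε u = 0 := by
    have hΦroot : Φ (AdjoinRoot.root _) = u := hφroot
    have h2 : Φ.symm u = AdjoinRoot.root ((X : k[X]) ^ p) := by
      rw [← hΦroot, AlgEquiv.symm_apply_apply]
    show (AdjoinRoot.liftAlgHom _ (Algebra.ofId k k) (0 : k) hε0) (Φ.symm u) = 0
    rw [h2, AdjoinRoot.liftAlgHom_root _ (Algebra.ofId k k) (0 : k) hε0]
  have hεtq : ε tq = 0 := by
    have h1 : (ε tq) ^ p = 0 := by rw [← map_pow, htqp, map_zero]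
    exact pow_eq_zero_iff hp.pos.ne' |>.mp h1
  -- the projection ρ = id ⊗ ε
  set ρ : (A ⊗[k] A) →ₐ[k] A := Algebra.TensorProduct.lift (AlgHom.id k A)
      ((Algebra.ofId k A).comp ε) (fun x y => Commute.all _ _) with hρdef
  have hρt : ∀ x y : A, ρ (x ⊗ₜ[k] y) = x * algebraMap k A (ε y) := by
    intro x y; rw [hρdef, Algebra.TensorProduct.lift_tmul]; rfl
  -- polynomials
  set F : k[X] := ∑ i ∈ Finset.range (p - 1), C (a i / ((i : k) + 1)) * X ^ (i + 1) with hFdef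
  set fp : k[X] := ∑ i ∈ Finset.range (p - 1), C (a i) * X ^ i with hfpdef
  have hFd : derivative F = fp := by
    rw [hFdef, hfpdef, map_sum]
    refine Finset.sum_congr rfl fun i hi => ?_
    have hi' : i + 1 < p := by have := Finset.mem_range.mp hi; omega
    rw [derivative_C_mul, derivative_X_pow]
    simp only [Nat.add_sub_cancel]
    rw [← mul_assoc, ← C_mul, Nat.cast_add, Nat.cast_one,
      div_mul_cancel₀ _ (hne i hi')]
  obtain ⟨g, hg⟩ := hsurj tq
  set P : k[X] := F.comp g with hPdef
  have hu₀F : u₀ = aeval tq F := by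
    rw [hu₀def, hFdef, map_sum]
    refine Finset.sum_congr rfl fun i hi => ?_
    rw [map_mul, aeval_C, map_pow, aeval_X, smul_eq_mul]
  have hu₀P : u₀ = aeval u P := by
    rw [hu₀F, hPdef, aeval_comp, hg]
  -- du₀ = ω
  have hDu₀ : KaehlerDifferential.D k A u₀ = ω := by
    rw [hu₀def, hωdef, map_sum]
    refine Finset.sum_congr rfl fun i hi => ?_
    have hi' : i + 1 < p := by have := Finset.mem_range.mp hi; omega
    rw [algebraMap_smul, Derivation.map_smul, Derivation.leibniz_pow]
    simp only [Nat.add_sub_cancel]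
    rw [← Nat.cast_smul_eq_nsmul k, smul_smul, Nat.cast_add, Nat.cast_one,
      div_mul_cancel₀ _ (hne i hi'), algebraMap_smul]
  -- the invariance computation
  have hchain : ∀ (w : A ⊗[k] A) (q : k[X]),
      δ₂ (aeval w q) = aeval w (derivative q) * δ₂ w := by
    intro w q
    have h1 : aeval w q = aeval w (q.map (algebraMap k A)) :=
      (aeval_map_algebraMap _ _ _).symm
    rw [h1, Derivation.map_aeval, derivative_map, aeval_map_algebraMap, smul_eq_mul]
  have hδ₂Δu : δ₂ (Δ u) = 1 := by
    rw [huprim, map_add, hδ₂, hδ₂, hδu]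
    simp [Algebra.TensorProduct.one_def]
  have hδ₂s : δ₂ ((1 : A) ⊗ₜ[k] u) = 1 := by
    rw [hδ₂, hδu, ← Algebra.TensorProduct.one_def]
  have hΔtq : Δ tq = aeval (Δ u) g := by
    rw [← hg, aeval_algHom_apply]
  have hstq : (1 : A) ⊗ₜ[k] tq = aeval ((1 : A) ⊗ₜ[k] u) g := by
    have h1 := aeval_algHom_apply
      (Algebra.TensorProduct.includeRight (R := k) (A := A) (B := A)) u g
    rw [Algebra.TensorProduct.includeRight_apply, Algebra.TensorProduct.includeRight_apply,
      hg] at h1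
    exact h1.symm
  have hside : ∀ v : A ⊗[k] A, δ₂ v = 1 →
      (∑ i ∈ Finset.range (p - 1), algebraMap k (A ⊗[k] A) (a i) •
        ((aeval v g) ^ i • δ₂ (aeval v g))) = aeval v (derivative P) := by
    intro v hv
    have hdP : derivative P = derivative g * fp.comp g := by
      rw [hPdef, derivative_comp, hFd]
    simp only [hchain, hv, mul_one]
    rw [hdP, map_mul, aeval_comp, hfpdef, map_sum, Finset.mul_sum]
    refine Finset.sum_congr rfl fun i hi => ?_
    rw [map_mul, aeval_C, map_pow, aeval_X]
    simp only [smul_eq_mul]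
    ring
  have hE : aeval (Δ u) (derivative P) = aeval ((1 : A) ⊗ₜ[k] u) (derivative P) := by
    have hE0 := congrArg δ₂.liftKaehlerDifferential hinv
    simp only [map_sum, LinearMap.map_smul,
      Derivation.liftKaehlerDifferential_comp_D] at hE0
    have hpow : ∀ i : ℕ, (1 : A) ⊗ₜ[k] (tq ^ i) = ((1 : A) ⊗ₜ[k] tq) ^ i := by
      intro i
      rw [← Algebra.TensorProduct.includeRight_apply, map_pow,
        Algebra.TensorProduct.includeRight_apply]
    simp only [map_pow, hpow] at hE0
    have hL := hside (Δ u) hδ₂Δu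
    have hR := hside ((1 : A) ⊗ₜ[k] u) hδ₂s
    rw [← hL, ← hR]
    simp only [← hΔtq, ← hstq]
    exact hE0
  -- extract: aeval u (derivative P) is a constant
  set c : k := (derivative P).coeff 0 with hcdef
  have hρΔu : ρ (Δ u) = u := by
    rw [huprim, map_add, hρt, hρt, hεu]
    simp
  have hρs : ρ ((1 : A) ⊗ₜ[k] u) = 0 := by
    rw [hρt, hεu]
    simp
  have hPc : aeval u (derivative P - C c) = 0 := by
    have h1 := congrArg ρ hE
    rw [← aeval_algHom_apply, ← aeval_algHom_apply, hρΔu, hρs] at h1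
    have h2 : aeval (0 : A) (derivative P) = algebraMap k A c := by
      rw [aeval_def, eval₂_at_zero, hcdef]
    rw [map_sub, aeval_C, h1, h2, sub_self]
  have hPm : ∀ m, 2 ≤ m → m < p → P.coeff m = 0 := by
    intro m h2 hmp
    have hdvd : ((X : k[X]) ^ p) ∣ (derivative P - C c) := hker _ hPc
    have h3 := X_pow_dvd_iff.mp hdvd (m - 1) (by omega)
    rw [coeff_sub, coeff_C, if_neg (by omega : ¬(m - 1 = 0)), sub_zero,
      coeff_derivative] at h3
    have hm1 : m - 1 + 1 = m := by omega
    rw [hm1] at h3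
    rcases mul_eq_zero.mp h3 with h | h
    · exact h
    · exact absurd h (hne (m - 1) (by omega))
  have hdecomp : u₀ = algebraMap k A (P.coeff 0) + P.coeff 1 • u := by
    have hco : ∀ d, d < p → (P - (C (P.coeff 0) + C (P.coeff 1) * X)).coeff d = 0 := by
      intro d hd
      rw [coeff_sub, coeff_add, coeff_C, coeff_C_mul, coeff_X]
      rcases d with _ | d
      · simp
      rcases d with _ | d
      · simp
      · have h4 := hPm (d + 2) (by omega) (by omega)
        simp [h4]
    obtain ⟨s, hs⟩ := X_pow_dvd_iff.mpr hco
    have hPP : P = (C (P.coeff 0) + C (P.coeff 1) * X) + X ^ p * s := by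
      rw [← hs]; ring
    conv_lhs => rw [hu₀P, hPP]
    rw [map_add, map_add, aeval_C, map_mul, aeval_C, aeval_X, map_mul,
      map_pow, aeval_X, hupow, Algebra.smul_def]
    ring
  have hP0 : P.coeff 0 = 0 := by
    have h1 : ε u₀ = P.coeff 0 := by
      rw [hdecomp, map_add, map_smul, hεu, smul_zero, add_zero]
      simpa using ε.commutes (P.coeff 0)
    have h2 : ε u₀ = 0 := by
      rw [hu₀F, ← aeval_algHom_apply, hεtq]
      have h3 : F.coeff 0 = 0 := by
        rw [hFdef, finset_sum_coeff]
        apply Finset.sum_eq_zero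
        intro i hi
        rw [coeff_C_mul, coeff_X_pow]
        simp
      rw [aeval_def, eval₂_at_zero, h3, map_zero]
    rw [← h1, h2]
  have hu₀u : u₀ = P.coeff 1 • u := by
    rw [hdecomp, hP0, map_zero, zero_add]
  have hc1 : P.coeff 1 ≠ 0 := by
    intro h
    exact hω (by rw [← hDu₀, hu₀u, h, zero_smul, map_zero])
  -- the four properties of u₀
  have prim : Δ u₀ = u₀ ⊗ₜ[k] (1 : A) + (1 : A) ⊗ₜ[k] u₀ := by
    rw [hu₀u, map_smul, huprim, smul_add, TensorProduct.smul_tmul',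
      ← TensorProduct.tmul_smul]
  have pow : u₀ ^ p = 0 := by
    rw [hu₀u, _root_.smul_pow, hupow, smul_zero]
  have adj : Algebra.adjoin k {u₀} = ⊤ := by
    have h1 : u₀ ∈ Algebra.adjoin k {u₀} := Algebra.self_mem_adjoin_singleton k u₀
    have h2 : u ∈ Algebra.adjoin k {u₀} := by
      have h3 := Subalgebra.smul_mem _ h1 ((P.coeff 1)⁻¹)
      have h4 : (P.coeff 1)⁻¹ • u₀ = u := by
        rw [hu₀u, smul_smul, inv_mul_cancel₀ hc1, one_smul]
      rwa [h4] at h3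
    rw [eq_top_iff, ← huadj]
    apply Algebra.adjoin_le
    rwa [Set.singleton_subset_iff]
  -- uniqueness
  have uniq : ∀ v : A,
      (Δ v = v ⊗ₜ[k] (1 : A) + (1 : A) ⊗ₜ[k] v ∧
        v ^ p = 0 ∧ Algebra.adjoin k {v} = ⊤ ∧
        KaehlerDifferential.D k A v = ω) → v = u₀ := by
    rintro v ⟨hvprim, hvpow, hvadj, hvD⟩
    have hDw : KaehlerDifferential.D k A (v - u₀) = 0 := by
      rw [map_sub, hvD, hDu₀, sub_self]
    have hδw : δ (v - u₀) = 0 := by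
      have h1 := congrArg δ.liftKaehlerDifferential hDw
      rwa [Derivation.liftKaehlerDifferential_comp_D, map_zero] at h1
    obtain ⟨q, hq⟩ := hsurj (v - u₀)
    have hq' : aeval u (derivative q) = 0 := by rw [← hδ, hq, hδw]
    have hqm : ∀ m, 1 ≤ m → m < p → q.coeff m = 0 := by
      intro m h1 hm
      have h3 := X_pow_dvd_iff.mp (hker _ hq') (m - 1) (by omega)
      rw [coeff_derivative] at h3
      have hm1 : m - 1 + 1 = m := by omega
      rw [hm1] at h3
      rcases mul_eq_zero.mp h3 with h | h
      · exact h
      · exact absurd h (hne (m - 1) (by omega))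
    have hco : ∀ d, d < p → (q - C (q.coeff 0)).coeff d = 0 := by
      intro d hd
      rw [coeff_sub, coeff_C]
      rcases d with _ | d
      · simp
      · rw [hqm (d + 1) (by omega) hd, if_neg (by omega)]
        ring
    obtain ⟨s, hs⟩ := X_pow_dvd_iff.mpr hco
    have hqq : q = C (q.coeff 0) + X ^ p * s := by rw [← hs]; ring
    have hw : v - u₀ = algebraMap k A (q.coeff 0) := by
      conv_lhs => rw [← hq, hqq]
      rw [map_add, aeval_C, map_mul, map_pow, aeval_X, hupow]
      ring
    have hΔw : Δ (v - u₀) = (v - u₀) ⊗ₜ[k] 1 + 1 ⊗ₜ[k] (v - u₀) := by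
      rw [map_sub, hvprim, prim, TensorProduct.sub_tmul, TensorProduct.tmul_sub]
      abel
    rw [hw, AlgHom.commutes] at hΔw
    have h5 := congrArg ρ hΔw
    rw [map_add, hρt, hρt, AlgHom.commutes] at h5
    have hε1 : ε (1 : A) = 1 := map_one ε
    have hεa : ε (algebraMap k A (q.coeff 0)) = q.coeff 0 := by
      simpa using ε.commutes (q.coeff 0)
    rw [hε1, hεa, map_one, mul_one, one_mul] at h5
    have h6 : algebraMap k A (q.coeff 0) = 0 := (left_eq_add.mp h5)
    exact sub_eq_zero.mp (hw.trans h6)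
  exact ⟨⟨u₀, ⟨prim, pow, adj, hDu₀⟩, fun v hv => uniq v hv⟩, prim, pow, adj, hDu₀⟩
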